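/- Let k be a field and let A be the 2-dimensional k-vector space with basis {x, y}. Let Δ : A → A ⊗ A be the linear map with Δx = x⊗x and Δy = 0. Then for each of the following two multiplication tables (with parameter b ∈ k, resp. c ∈ k): (i) x² = 0, xy = by, yx = 0, y² = 0; (ii) x² = x, xy = 0, yx = cy, y² = 0, the map Δ is coassociative, Δ(ab) = Δ(a)Δ(b) for all a, b ∈ A, and the self-distributivity identity holds: for all a, b ∈ A, (a·b)·x = (a·x)·(b·x) and (a·b)·y = 0. -/

import Mathlib

open TensorProduct in
/-- With comultiplication `Δx = x⊗x, Δy = 0`, each of the two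
multiplication tables (i) `x² = 0, xy = b•y, yx = 0, y² = 0` and
(ii) `x² = x, xy = 0, yx = c•y, y² = 0` yields a (non-counital)
self-distributive bialgebra. -/
theorem stmt_10 (k A : Type*) [Field k] (b c : k)
    [NonUnitalNonAssocRing A] [Module k A]
    [SMulCommClass k A A] [IsScalarTower k A A]
    (B : Module.Basis (Fin 2) k A) (x y : A) (hx : x = B 0) (hy : y = B 1)
    (Δ : A →ₗ[k] A ⊗[k] A)
    (hΔx : Δ x = x ⊗ₜ[k] x) (hΔy : Δ y = 0) :
    ((x * x = 0 ∧ x * y = b • y ∧ y * x = 0 ∧ y * y = 0) →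
      ((TensorProduct.assoc k A A A).toLinearMap ∘ₗ Δ.rTensor A ∘ₗ Δ = Δ.lTensor A ∘ₗ Δ)
      ∧ (∀ u v : A, Δ (u * v) = Δ u * Δ v)
      ∧ (∀ u v : A, (u * v) * x = (u * x) * (v * x) ∧ (u * v) * y = 0)) ∧
    ((x * x = x ∧ x * y = 0 ∧ y * x = c • y ∧ y * y = 0) →
      ((TensorProduct.assoc k A A A).toLinearMap ∘ₗ Δ.rTensor A ∘ₗ Δ = Δ.lTensor A ∘ₗ Δ)
      ∧ (∀ u v : A, Δ (u * v) = Δ u * Δ v)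
      ∧ (∀ u v : A, (u * v) * x = (u * x) * (v * x) ∧ (u * v) * y = 0)) := by
  have hdecomp : ∀ u : A, ∃ p q : k, u = p • x + q • y := by
    intro u
    refine ⟨B.repr u 0, B.repr u 1, ?_⟩
    rw [hx, hy]
    have := B.sum_repr u
    rw [Fin.sum_univ_two] at this
    exact this.symm
  have hcoassoc : ((TensorProduct.assoc k A A A).toLinearMap ∘ₗ Δ.rTensor A ∘ₗ Δ
      = Δ.lTensor A ∘ₗ Δ) := by
    apply Module.Basis.ext B
    intro i
    fin_cases i <;> simp [← hx, ← hy, hΔx, hΔy]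
  constructor
  · rintro ⟨h1, h2, h3, h4⟩
    refine ⟨hcoassoc, ?_, ?_⟩
    · intro u v
      obtain ⟨p, q, hu⟩ := hdecomp u
      obtain ⟨r, s, hv⟩ := hdecomp v
      subst hu hv
      simp [add_mul, mul_add, smul_mul_assoc, mul_smul_comm, h1, h2, h3, h4,
        hΔx, hΔy, smul_smul, Algebra.TensorProduct.tmul_mul_tmul]
    · intro u v
      obtain ⟨p, q, hu⟩ := hdecomp u
      obtain ⟨r, s, hv⟩ := hdecomp v
      subst hu hv
      constructor <;>
        simp [add_mul, mul_add, smul_mul_assoc, mul_smul_comm, h1, h2, h3, h4, smul_smul, mul_assoc]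
  · rintro ⟨h1, h2, h3, h4⟩
    refine ⟨hcoassoc, ?_, ?_⟩
    · intro u v
      obtain ⟨p, q, hu⟩ := hdecomp u
      obtain ⟨r, s, hv⟩ := hdecomp v
      subst hu hv
      simp [add_mul, mul_add, smul_mul_assoc, mul_smul_comm, h1, h2, h3, h4,
        hΔx, hΔy, smul_smul, Algebra.TensorProduct.tmul_mul_tmul]
    · intro u v
      obtain ⟨p, q, hu⟩ := hdecomp u
      obtain ⟨r, s, hv⟩ := hdecomp v
      subst hu hv
      constructor <;>
        simp [add_mul, mul_add, smul_mul_assoc, mul_smul_comm, h1, h2, h3, h4, smul_smul, mul_assoc]
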